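/- There exist real numbers a, b, c such that f(θ) = a + b·cos θ + c·sin θ for all θ ∈ ℝ. -/

import Mathlib

open Matrix
open scoped ComplexOrder

set_option maxHeartbeats 1000000

lemma exp_smul_involutive {m : ℕ} (G : Matrix (Fin m) (Fin m) ℂ) (hG2 : G * G = 1) (z : ℂ) :
    NormedSpace.exp (z • G) = Complex.cosh z • 1 + Complex.sinh z • G := by
  letI : SeminormedRing (Matrix (Fin m) (Fin m) ℂ) := Matrix.linftyOpSemiNormedRing
  letI : NormedRing (Matrix (Fin m) (Fin m) ℂ) := Matrix.linftyOpNormedRing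
  letI : NormedAlgebra ℂ (Matrix (Fin m) (Fin m) ℂ) := Matrix.linftyOpNormedAlgebra
  have hGe : ∀ k : ℕ, G ^ (2 * k) = 1 := by
    intro k
    rw [pow_mul, sq, hG2, one_pow]
  have he : HasSum (fun k : ℕ => (Nat.factorial (2 * k) : ℂ)⁻¹ • (z • G) ^ (2 * k))
      (Complex.cosh z • (1 : Matrix (Fin m) (Fin m) ℂ)) := by
    have h2 := (Complex.hasSum_cosh z).smul_const (1 : Matrix (Fin m) (Fin m) ℂ)
    have hfun : (fun k : ℕ => (Nat.factorial (2 * k) : ℂ)⁻¹ • (z • G) ^ (2 * k))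
        = fun k : ℕ => (z ^ (2 * k) / (Nat.factorial (2 * k) : ℂ)) • (1 : Matrix (Fin m) (Fin m) ℂ) := by
      funext k
      rw [smul_pow, hGe, smul_smul, div_eq_mul_inv]
      congr 1
      exact mul_comm _ _
    rw [hfun]
    exact h2
  have ho : HasSum (fun k : ℕ => (Nat.factorial (2 * k + 1) : ℂ)⁻¹ • (z • G) ^ (2 * k + 1))
      (Complex.sinh z • G) := by
    have h2 := (Complex.hasSum_sinh z).smul_const G
    have hfun : (fun k : ℕ => (Nat.factorial (2 * k + 1) : ℂ)⁻¹ • (z • G) ^ (2 * k + 1))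
        = fun k : ℕ => (z ^ (2 * k + 1) / (Nat.factorial (2 * k + 1) : ℂ)) • G := by
      funext k
      rw [smul_pow, pow_succ G, hGe, one_mul, smul_smul, div_eq_mul_inv]
      congr 1
      exact mul_comm _ _
    rw [hfun]
    exact h2
  have h : HasSum (fun n : ℕ => (Nat.factorial n : ℂ)⁻¹ • (z • G) ^ n)
      (Complex.cosh z • (1 : Matrix (Fin m) (Fin m) ℂ) + Complex.sinh z • G) :=
    HasSum.even_add_odd (f := fun n : ℕ => (Nat.factorial n : ℂ)⁻¹ • (z • G) ^ n) he ho
  rw [NormedSpace.exp_eq_tsum (𝕂 := ℂ)]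
  exact h.tsum_eq

lemma trace_herm_real {m : ℕ} {ρ N : Matrix (Fin m) (Fin m) ℂ} (hρ : ρ.IsHermitian)
    (hN : N.IsHermitian) : ∃ r : ℝ, (ρ * N).trace = (r : ℂ) := by
  refine ⟨(ρ * N).trace.re, ?_⟩
  rw [eq_comm, ← Complex.conj_eq_iff_re]
  have h1 : ((ρ * N)ᴴ).trace = star (ρ * N).trace := trace_conjTranspose _
  have h2 : (ρ * N)ᴴ = N * ρ := by rw [conjTranspose_mul, hρ.eq, hN.eq]
  calc (starRingEnd ℂ) (ρ * N).trace = star (ρ * N).trace := rfl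
    _ = ((ρ * N)ᴴ).trace := h1.symm
    _ = (N * ρ).trace := by rw [h2]
    _ = (ρ * N).trace := trace_mul_comm _ _

lemma main_aux {m : ℕ} (ρ G A W : Matrix (Fin m) (Fin m) ℂ)
    (hρ : ρ.IsHermitian) (hG : G.IsHermitian) (hG2 : G * G = 1) (hA : A.IsHermitian)
    (f : ℝ → ℂ)
    (hf : ∀ θ : ℝ, f θ =
      Matrix.trace (ρ * Wᴴ * NormedSpace.exp (((Complex.I * θ) / 2) • G) *
        A * NormedSpace.exp ((-((Complex.I * θ) / 2)) • G) * W)) :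
    ∃ a b c : ℝ, ∀ θ : ℝ,
      f θ = (a : ℂ) + (b : ℂ) * (Real.cos θ : ℂ) + (c : ℂ) * (Real.sin θ : ℂ) := by
  set u := (ρ * (Wᴴ * A * W)).trace with hu_def
  set vv := (ρ * (Wᴴ * (G * A) * W)).trace with hvv_def
  set ww := (ρ * (Wᴴ * (A * G) * W)).trace with hww_def
  set x := (ρ * (Wᴴ * (G * A * G) * W)).trace with hx_def
  have hMu : (Wᴴ * A * W).IsHermitian := isHermitian_conjTranspose_mul_mul W hA
  have hGAG : (G * A * G).IsHermitian := by
    have := isHermitian_conjTranspose_mul_mul G hA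
    rwa [hG.eq] at this
  have hMx : (Wᴴ * (G * A * G) * W).IsHermitian := isHermitian_conjTranspose_mul_mul W hGAG
  have hComm : (Complex.I • (G * A - A * G)).IsHermitian := by
    unfold Matrix.IsHermitian
    rw [conjTranspose_smul, conjTranspose_sub, conjTranspose_mul, conjTranspose_mul,
      hG.eq, hA.eq, Complex.star_def, Complex.conj_I, neg_smul, ← smul_neg, neg_sub]
  have hMy : (Wᴴ * (Complex.I • (G * A - A * G)) * W).IsHermitian :=
    isHermitian_conjTranspose_mul_mul W hComm
  obtain ⟨ur, hur⟩ : ∃ r : ℝ, u = (r : ℂ) := trace_herm_real hρ hMu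
  obtain ⟨xr, hxr⟩ : ∃ r : ℝ, x = (r : ℂ) := trace_herm_real hρ hMx
  obtain ⟨yr, hyr⟩ : ∃ r : ℝ, (ρ * (Wᴴ * (Complex.I • (G * A - A * G)) * W)).trace = (r : ℂ) :=
    trace_herm_real hρ hMy
  have hy_eq : (ρ * (Wᴴ * (Complex.I • (G * A - A * G)) * W)).trace
      = Complex.I * vv - Complex.I * ww := by
    rw [hvv_def, hww_def]
    simp only [Matrix.mul_sub, Matrix.sub_mul, Matrix.mul_smul, Matrix.smul_mul,
      trace_sub, trace_smul, smul_eq_mul]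
    ring_nf
  rw [hy_eq] at hyr
  have key : ∀ α β : ℂ,
      (ρ * Wᴴ * (α • (1 : Matrix (Fin m) (Fin m) ℂ) + β • G) * A * (α • 1 - β • G) * W).trace
        = α * α * u + α * β * vv - α * β * ww - β * β * x := by
    intro α β
    rw [hu_def, hvv_def, hww_def, hx_def]
    simp only [Matrix.mul_add, Matrix.add_mul, Matrix.mul_sub, Matrix.sub_mul,
      Matrix.mul_smul, Matrix.smul_mul, Matrix.mul_one, Matrix.one_mul,
      trace_add, trace_sub, trace_smul, smul_eq_mul, smul_smul, Matrix.mul_assoc]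
    ring
  refine ⟨(ur + xr) / 2, (ur - xr) / 2, yr / 2, ?_⟩
  intro θ
  rw [hf θ, exp_smul_involutive G hG2, exp_smul_involutive G hG2,
    Complex.cosh_neg, Complex.sinh_neg, neg_smul, ← sub_eq_add_neg]
  have hz : Complex.I * (θ : ℂ) / 2 = ((θ : ℂ) / 2) * Complex.I := by ring
  rw [hz, Complex.cosh_mul_I, Complex.sinh_mul_I]
  rw [key (Complex.cos ((θ : ℂ) / 2)) (Complex.sin ((θ : ℂ) / 2) * Complex.I)]
  rw [hur, hxr, Complex.ofReal_cos, Complex.ofReal_sin]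
  have hc2 : Complex.cos ((θ : ℂ)) = 2 * Complex.cos ((θ : ℂ) / 2) ^ 2 - 1 := by
    conv_lhs => rw [show ((θ : ℂ)) = 2 * ((θ : ℂ) / 2) by ring]
    rw [Complex.cos_two_mul]
  have hs2 : Complex.sin ((θ : ℂ)) = 2 * Complex.sin ((θ : ℂ) / 2) * Complex.cos ((θ : ℂ) / 2) := by
    conv_lhs => rw [show ((θ : ℂ)) = 2 * ((θ : ℂ) / 2) by ring]
    rw [Complex.sin_two_mul]
  push_cast
  linear_combination (-((ur : ℂ) - xr) / 2) * hc2 + (-(yr : ℂ) / 2) * hs2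
    + (Complex.cos ((θ : ℂ) / 2) * Complex.sin ((θ : ℂ) / 2)) * hyr
    + (-(xr : ℂ) * Complex.sin ((θ : ℂ) / 2) ^ 2) * Complex.I_sq
    + (xr : ℂ) * Complex.sin_sq_add_cos_sq ((θ : ℂ) / 2)

theorem stmt7 (n : ℕ) (hn : 1 ≤ n)
    (H ρ G V W : Matrix (Fin (2 ^ n)) (Fin (2 ^ n)) ℂ)
    (hH : H.IsHermitian)
    (hρherm : ρ.IsHermitian) (hρpsd : ρ.PosSemidef) (hρtr : ρ.trace = 1)
    (hGherm : G.IsHermitian) (hG2 : G * G = 1)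
    (hV : V ∈ Matrix.unitaryGroup (Fin (2 ^ n)) ℂ)
    (hW : W ∈ Matrix.unitaryGroup (Fin (2 ^ n)) ℂ)
    (f : ℝ → ℂ)
    (hf : ∀ θ : ℝ, f θ =
      Matrix.trace (ρ * Wᴴ * NormedSpace.exp (((Complex.I * θ) / 2) • G) *
        (Vᴴ * H * V) * NormedSpace.exp ((-((Complex.I * θ) / 2)) • G) * W)) :
    ∃ a b c : ℝ, ∀ θ : ℝ,
      f θ = (a : ℂ) + (b : ℂ) * (Real.cos θ : ℂ) + (c : ℂ) * (Real.sin θ : ℂ) := by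
  exact main_aux ρ G (Vᴴ * H * V) W hρherm hGherm hG2
    (isHermitian_conjTranspose_mul_mul V hH) f hf
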